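/- For the Fréchet (inverse Weibull) distribution F(y) = exp(−(θ₂/y)^{β₂}) with β₂ > 1, I(F_{Y_{[r:n]}}, F_Y) = (θ₂/β₂)Γ((β₂−1)/β₂) + α((n−2r+1)/(n+1))·(θ₂/β₂)Γ((β₂−1)/β₂)(1 − 2^{1/β₂ − 1}). In particular CE(Y) = (θ₂/β₂)Γ((β₂−1)/β₂) and −∫₀^∞ F² log F dy = (2^{1/β₂−1}θ₂/β₂)Γ((β₂−1)/β₂). -/

import Mathlib

open MeasureTheory Real Set

lemma frechet_key {θ β k : ℝ} (hθ : 0 < θ) (hβ : 1 < β) (hk : 0 < k) :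
    IntegrableOn (fun y => (θ / y) ^ β * exp (-(k * (θ / y) ^ β))) (Ioi 0) ∧
    ∫ y in Ioi (0:ℝ), (θ / y) ^ β * exp (-(k * (θ / y) ^ β))
      = (θ / β) * k ^ (1 / β - 1) * Real.Gamma ((β - 1) / β) := by
  have hβ0 : 0 < β := lt_trans zero_lt_one hβ
  have hp : (-β) ≠ 0 := by simpa using hβ0.ne'
  have hb : 0 < k * θ ^ β := by positivity
  have hq : (-1:ℝ) < -1 / β := by
    rw [neg_div]
    have h1 : 1 / β < 1 := by rw [div_lt_one hβ0]; exact hβ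
    linarith
  set g : ℝ → ℝ := fun u => (θ ^ β / β) * (u ^ (-1 / β) * exp (-(k * θ ^ β) * u)) with hgdef
  have hpt : ∀ x ∈ Ioi (0:ℝ),
      (|(-β)| * x ^ ((-β) - 1)) • g (x ^ (-β))
        = (θ / x) ^ β * exp (-(k * (θ / x) ^ β)) := by
    intro x hx
    have hx0 : (0:ℝ) < x := hx
    have h1 : (x ^ (-β)) ^ (-1 / β) = x := by
      rw [← rpow_mul hx0.le, show (-β) * (-1 / β) = 1 by field_simp, rpow_one]
    have h2 : (θ / x) ^ β = θ ^ β * x ^ (-β) := by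
      rw [div_rpow hθ.le hx0.le, rpow_neg hx0.le, div_eq_mul_inv]
    have h3 : x ^ (-β) = x ^ (-β - 1) * x := by
      rw [← rpow_add_one hx0.ne' (-β - 1)]; norm_num
    rw [smul_eq_mul, hgdef]
    simp only []
    rw [abs_neg, abs_of_pos hβ0, h1, h2,
      show -(k * (θ ^ β * x ^ (-β))) = -(k * θ ^ β) * x ^ (-β) by ring, h3]
    field_simp
  have hgint : IntegrableOn g (Ioi 0) := by
    have := (integrableOn_rpow_mul_exp_neg_mul_rpow (p := 1) (s := -1 / β) hq one_pos hb)
    simp only [rpow_one] at this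
    exact this.const_mul _
  have hcompint : IntegrableOn (fun x => (|(-β)| * x ^ ((-β) - 1)) • g (x ^ (-β))) (Ioi 0) :=
    (integrableOn_Ioi_comp_rpow_iff g hp).mpr hgint
  constructor
  · exact hcompint.congr_fun hpt measurableSet_Ioi
  · have hval : ∫ u in Ioi (0:ℝ), u ^ (-1 / β) * exp (-(k * θ ^ β) * u)
        = (k * θ ^ β) ^ (1 / β - 1) * Real.Gamma ((β - 1) / β) := by
      have := integral_rpow_mul_exp_neg_mul_rpow (p := 1) (q := -1 / β) one_pos hq hb
      simp only [rpow_one, div_one] at this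
      rw [this, show -(-1 / β + 1) = 1 / β - 1 by ring,
        show -1 / β + 1 = (β - 1) / β by field_simp; ring]
      ring
    calc ∫ y in Ioi (0:ℝ), (θ / y) ^ β * exp (-(k * (θ / y) ^ β))
        = ∫ x in Ioi (0:ℝ), (|(-β)| * x ^ ((-β) - 1)) • g (x ^ (-β)) :=
          (setIntegral_congr_fun measurableSet_Ioi hpt).symm
      _ = ∫ u in Ioi (0:ℝ), g u := integral_comp_rpow_Ioi g hp
      _ = (θ ^ β / β) * ((k * θ ^ β) ^ (1 / β - 1) * Real.Gamma ((β - 1) / β)) := by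
          rw [hgdef]
          simp only []
          rw [integral_const_mul, hval]
      _ = (θ / β) * k ^ (1 / β - 1) * Real.Gamma ((β - 1) / β) := by
          rw [mul_rpow hk.le (by positivity), ← rpow_mul hθ.le,
            show β * (1 / β - 1) = 1 - β by field_simp]
          have hθθ : θ ^ β * θ ^ (1 - β) = θ := by rw [← rpow_add hθ]; norm_num
          rw [show θ ^ β / β * (k ^ (1 / β - 1) * θ ^ (1 - β) * Real.Gamma ((β - 1) / β))
              = (θ ^ β * θ ^ (1 - β)) * (k ^ (1 / β - 1) * Real.Gamma ((β - 1) / β)) / β by ring,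
            hθθ]
          ring
  
/-- For the Fréchet (inverse Weibull) distribution
`F(y) = exp(−(θ₂/y)^{β₂})`, `β₂ > 1`,
`I(F_{Y[r:n]}, F_Y) = (θ₂/β₂)Γ((β₂−1)/β₂)(1 + α((n−2r+1)/(n+1))(1 − 2^{1/β₂−1}))`;
in particular `CE(Y) = (θ₂/β₂)Γ((β₂−1)/β₂)` and
`−∫₀^∞ F² log F = (2^{1/β₂−1} θ₂/β₂)Γ((β₂−1)/β₂)`. -/
theorem stmt_16 (θ₂ β₂ α : ℝ) (hθ : 0 < θ₂) (hβ : 1 < β₂) (hα : |α| ≤ 1)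
    (n r : ℕ) (hr1 : 1 ≤ r) (hrn : r ≤ n)
    (F : ℝ → ℝ) (hF : ∀ y ∈ Ioi (0:ℝ), F y = exp (-(θ₂ / y) ^ β₂))
    (G : ℝ → ℝ)
    (hG : ∀ y, G y = F y * (1 + α * (((n : ℝ) - 2 * r + 1) / ((n : ℝ) + 1)) * (1 - F y))) :
    (-∫ y in Ioi (0:ℝ), G y * log (F y)
        = (θ₂ / β₂) * Real.Gamma ((β₂ - 1) / β₂)
          + α * (((n : ℝ) - 2 * r + 1) / ((n : ℝ) + 1))
            * ((θ₂ / β₂) * Real.Gamma ((β₂ - 1) / β₂)) * (1 - (2 : ℝ) ^ (1 / β₂ - 1)))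
    ∧ (-∫ y in Ioi (0:ℝ), F y * log (F y) = (θ₂ / β₂) * Real.Gamma ((β₂ - 1) / β₂))
    ∧ (-∫ y in Ioi (0:ℝ), (F y) ^ 2 * log (F y)
        = ((2 : ℝ) ^ (1 / β₂ - 1) * θ₂ / β₂) * Real.Gamma ((β₂ - 1) / β₂)) := by
  obtain ⟨hi1, hv1⟩ := frechet_key (k := 1) hθ hβ one_pos
  obtain ⟨hi2, hv2⟩ := frechet_key (k := 2) hθ hβ two_pos
  have e1 : ∀ y ∈ Ioi (0:ℝ),
      F y * log (F y) = -((θ₂ / y) ^ β₂ * exp (-(1 * (θ₂ / y) ^ β₂))) := by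
    intro y hy
    rw [hF y hy, Real.log_exp, one_mul]
    ring
  have e2 : ∀ y ∈ Ioi (0:ℝ),
      (F y) ^ 2 * log (F y) = -((θ₂ / y) ^ β₂ * exp (-(2 * (θ₂ / y) ^ β₂))) := by
    intro y hy
    rw [hF y hy, Real.log_exp, sq, ← Real.exp_add,
      show -(θ₂ / y) ^ β₂ + -(θ₂ / y) ^ β₂ = -(2 * (θ₂ / y) ^ β₂) by ring]
    ring
  have intF1 : IntegrableOn (fun y => F y * log (F y)) (Ioi 0) :=
    (integrableOn_congr_fun e1 measurableSet_Ioi).mpr hi1.neg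
  have intF2 : IntegrableOn (fun y => (F y) ^ 2 * log (F y)) (Ioi 0) :=
    (integrableOn_congr_fun e2 measurableSet_Ioi).mpr hi2.neg
  have I1 : ∫ y in Ioi (0:ℝ), F y * log (F y)
      = -((θ₂ / β₂) * Real.Gamma ((β₂ - 1) / β₂)) := by
    rw [setIntegral_congr_fun measurableSet_Ioi e1, integral_neg, hv1, one_rpow, mul_one]
  have I2 : ∫ y in Ioi (0:ℝ), (F y) ^ 2 * log (F y)
      = -((θ₂ / β₂) * (2:ℝ) ^ (1 / β₂ - 1) * Real.Gamma ((β₂ - 1) / β₂)) := by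
    rw [setIntegral_congr_fun measurableSet_Ioi e2, integral_neg, hv2]
  have hsplit : ∫ y in Ioi (0:ℝ), G y * log (F y)
      = (1 + α * (((n : ℝ) - 2 * r + 1) / ((n : ℝ) + 1)))
          * (∫ y in Ioi (0:ℝ), F y * log (F y))
        - α * (((n : ℝ) - 2 * r + 1) / ((n : ℝ) + 1))
          * (∫ y in Ioi (0:ℝ), (F y) ^ 2 * log (F y)) := by
    rw [← integral_const_mul, ← integral_const_mul,
      ← integral_sub (intF1.const_mul _) (intF2.const_mul _)]
    refine integral_congr_ae (Filter.Eventually.of_forall fun y => ?_)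
    simp only [hG]
    ring
  refine ⟨?_, ?_, ?_⟩
  · rw [hsplit, I1, I2]; ring
  · rw [I1]; ring
  · rw [I2]; ring
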